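/- Let k be a field of characteristic 3 and X the hyperelliptic curve y^2 = f(x) with f(x) = x^9 + a_7 x^7 + a_6 x^6 + a_4 x^4 + a_3 x^3 + x of nonzero discriminant. Then the Cartier operator C on rational differentials satisfies C((1/(xy)) dx) = (x^2/y + a_6^{1/3} x/y + a_3^{1/3}/y) dx, using the identity -d^2(1/(xy))/dx^2 = (x^9 + a_6 x^6 + a_3 x^3)/(x^3 y^3) on X. -/

import Mathlib

open Polynomial Matrix

/-- Discriminant of a (monic) degree-9 polynomial, defined as the determinant of the
17×17 Sylvester matrix of `f` (formal degree 9) and its derivative (formal degree 8).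
For monic `f` of degree 9 this equals the discriminant, since `(-1)^(9·8/2) = 1`. -/
noncomputable def disc9 {k : Type*} [Field k] (f : Polynomial k) : k :=
  (Matrix.of fun i j : Fin 17 =>
    if (i : ℕ) < 8 then
      (if (j : ℕ) ≤ (i : ℕ) + 9 then f.coeff (9 + (i : ℕ) - (j : ℕ)) else 0)
    else
      (if (j : ℕ) ≤ (i : ℕ) then (Polynomial.derivative f).coeff ((i : ℕ) - (j : ℕ)) else 0)).det

/-- Derivative of a rational function, via the quotient rule on the reduced
numerator/denominator representation. -/
noncomputable def ratDeriv {k : Type*} [Field k] (q : RatFunc k) : RatFunc k :=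
  algebraMap k[X] (RatFunc k)
      (Polynomial.derivative q.num * q.denom - q.num * Polynomial.derivative q.denom) /
    algebraMap k[X] (RatFunc k) (q.denom ^ 2)

set_option maxHeartbeats 1000000 in
/-- char 3, `X : y² = f(x)` with
`f = x^9 + a_7x^7 + a_6x^6 + a_4x^4 + a_3x^3 + x` of nonzero discriminant.  Writing
`1/(xy) = G₀·y⁻¹` with `G₀ = 1/x ∈ k(x)`, and using `y' = f'/(2y)`, the coefficient of
`y⁻¹` in the `i`-th derivative of `1/(xy)` is `Gᵢ₊₁ = Gᵢ' - Gᵢ·f'/(2f)`.  The identity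
`-d²(1/(xy))/dx² = (x^9 + a_6x^6 + a_3x^3)/(x³y³)` reads `-G₂ = (x^9+a_6x^6+a_3x^3)/(x³f)`
(since `y³ = yf`), and the Cartier operator formula `C(h dx) = (-h'')^{1/3} dx` then gives
`C((1/(xy))dx) = (x²/y + a_6^{1/3}x/y + a_3^{1/3}/y)dx`, i.e.
`((x² + a_6^{1/3}x + a_3^{1/3})/y)³ = -G₂·y⁻³`, i.e. `(x²+ux+v)³ = -G₂·f` for the cube
roots `u, v`. -/
lemma ratDeriv_div {k : Type*} [Field k] (p q : k[X]) (hq : q ≠ 0) :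
    ratDeriv (algebraMap k[X] (RatFunc k) p / algebraMap k[X] (RatFunc k) q) =
      algebraMap k[X] (RatFunc k) (derivative p * q - p * derivative q) /
        algebraMap k[X] (RatFunc k) (q ^ 2) := by
  set r := algebraMap k[X] (RatFunc k) p / algebraMap k[X] (RatFunc k) q with hr
  have hd : r.denom ≠ 0 := r.denom_ne_zero
  have hqm : algebraMap k[X] (RatFunc k) q ≠ 0 := by
    simpa using (RatFunc.algebraMap_ne_zero hq)
  have hdm : algebraMap k[X] (RatFunc k) r.denom ≠ 0 := RatFunc.algebraMap_ne_zero hd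
  have h1 : r.num * q = p * r.denom := by
    have := r.num_div_denom
    rw [hr] at this
    have h := (div_eq_div_iff hdm hqm).mp this
    apply RatFunc.algebraMap_injective k
    rw [_root_.map_mul, _root_.map_mul]; exact h
  have h2 : derivative r.num * q + r.num * derivative q
      = derivative p * r.denom + p * derivative r.denom := by
    have := congrArg derivative h1
    simpa [derivative_mul] using this
  show algebraMap k[X] (RatFunc k) _ / algebraMap k[X] (RatFunc k) _ = _
  rw [div_eq_div_iff (by exact RatFunc.algebraMap_ne_zero (pow_ne_zero 2 hd))
    (RatFunc.algebraMap_ne_zero (pow_ne_zero 2 hq)), ← _root_.map_mul, ← _root_.map_mul]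
  congr 1
  linear_combination (q * r.denom) * h2 - (derivative r.denom * q + derivative q * r.denom) * h1

theorem stmt6 {k : Type*} [Field k] [CharP k 3]
    (a3 a4 a6 a7 : k) (f : k[X])
    (hf : f = X ^ 9 + C a7 * X ^ 7 + C a6 * X ^ 6 + C a4 * X ^ 4 + C a3 * X ^ 3 + X)
    (hdisc : disc9 f ≠ 0)
    (F : RatFunc k) (hF : F = algebraMap k[X] (RatFunc k) f)
    (G0 G1 G2 : RatFunc k)
    (hG0 : G0 = (RatFunc.X)⁻¹)
    (hG1 : G1 = ratDeriv G0 - G0 * ratDeriv F / (2 * F))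
    (hG2 : G2 = ratDeriv G1 - G1 * ratDeriv F / (2 * F)) :
    -G2 = algebraMap k[X] (RatFunc k) (X ^ 9 + C a6 * X ^ 6 + C a3 * X ^ 3) /
        (RatFunc.X ^ 3 * F) ∧
      ∀ u v : k, u ^ 3 = a6 → v ^ 3 = a3 →
        algebraMap k[X] (RatFunc k) ((X ^ 2 + C u * X + C v) ^ 3) = -G2 * F := by
  set φ := algebraMap k[X] (RatFunc k) with hφ
  set g : k[X] := X ^ 9 + C a6 * X ^ 6 + C a3 * X ^ 3 with hg
  have h3 : (3 : k[X]) = 0 := by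
    have : ((3:ℕ) : k[X]) = 0 := CharP.cast_eq_zero k[X] 3
    simpa using this
  have hA : X * derivative f + g = f := by
    rw [hf, hg]
    simp only [derivative_add, derivative_mul, derivative_C, derivative_X_pow, derivative_X,
      _root_.map_ofNat, _root_.map_natCast]
    push_cast
    linear_combination (3*X^9 + 2*C a7 * X^7 + 2*C a6*X^6 + C a4*X^4 + C a3*X^3) * h3
  have hB : derivative g = 0 := by
    rw [hg]
    simp only [derivative_add, derivative_mul, derivative_C, derivative_X_pow,
      _root_.map_ofNat, _root_.map_natCast]
    push_cast
    linear_combination (3*X^8 + 2*C a6*X^5 + C a3 * X^2) * h3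
  have hf0 : f ≠ 0 := by
    intro h
    have : f.coeff 9 = 1 := by
      rw [hf]; simp [coeff_X_pow, coeff_X, coeff_C_mul]
    rw [h] at this; simp at this
  have hX0 : (X : k[X]) ≠ 0 := X_ne_zero
  have hXm : φ X ≠ 0 := RatFunc.algebraMap_ne_zero hX0
  have hfm : φ f ≠ 0 := RatFunc.algebraMap_ne_zero hf0
  have h2R : (2 : RatFunc k) = -1 := by
    have h3k : (3 : k) = 0 := by
      have : ((3:ℕ) : k) = 0 := CharP.cast_eq_zero k 3
      simpa using this
    have h3R : (3 : RatFunc k) = 0 := by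
      have := congrArg (algebraMap k (RatFunc k)) h3k
      rw [_root_.map_ofNat, _root_.map_zero] at this
      exact this
    linear_combination h3R
  have rdF : ratDeriv F = φ (derivative f) := by
    rw [hF, show φ f = φ f / φ 1 by simp, ratDeriv_div f 1 one_ne_zero]
    simp
    rfl
  have hG0' : G0 = φ 1 / φ X := by
    rw [hG0, _root_.map_one, one_div, RatFunc.algebraMap_X]
  have hG1' : G1 = φ (-g) / φ (X ^ 2 * f) := by
    rw [hG1, hG0', ratDeriv_div 1 X hX0, rdF, hF, h2R]
    rw [eq_div_iff (RatFunc.algebraMap_ne_zero (mul_ne_zero (pow_ne_zero 2 hX0) hf0))]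
    field_simp [RatFunc.X_ne_zero]
    simp only [← RatFunc.algebraMap_X, ← _root_.map_pow, ← _root_.map_mul, ← _root_.map_sub, ← _root_.map_neg, ← hφ]
    exact congrArg φ (by simp only [derivative_one, derivative_X]; linear_combination (Polynomial.X^3 * f) * hA)
  have hgf2 : (X:k[X]) ^ 2 * f ≠ 0 := mul_ne_zero (pow_ne_zero 2 hX0) hf0
  have hG2' : G2 = φ (-g) / φ (X ^ 3 * f) := by
    rw [hG2, hG1', ratDeriv_div (-g) (X^2*f) hgf2, rdF, hF, h2R]
    have hm1 : φ (X ^ 2 * f) ≠ 0 := RatFunc.algebraMap_ne_zero hgf2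
    have hm2 : φ (X ^ 3 * f) ≠ 0 :=
      RatFunc.algebraMap_ne_zero (mul_ne_zero (pow_ne_zero 3 hX0) hf0)
    rw [eq_div_iff hm2]
    field_simp [RatFunc.X_ne_zero, hm1, hfm]
    simp only [← RatFunc.algebraMap_X, ← RatFunc.algebraMap_C, ← _root_.map_pow, ← _root_.map_mul,
      ← _root_.map_sub, ← _root_.map_add, ← _root_.map_neg, ← hφ]
    rw [div_sub' (by exact RatFunc.algebraMap_ne_zero (pow_ne_zero 2 hgf2)), div_mul_eq_mul_div,
      div_eq_iff (by exact RatFunc.algebraMap_ne_zero (pow_ne_zero 2 hgf2)), ← _root_.map_mul,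
      ← _root_.map_sub, ← _root_.map_mul, ← _root_.map_mul]
    refine congrArg φ ?_
    simp only [derivative_neg, derivative_mul, derivative_X_pow]
    rw [hB]
    have hC2 : (C ((2:ℕ):k) : k[X]) = -1 := by
      rw [Nat.cast_ofNat, _root_.map_ofNat]; linear_combination h3
    rw [hC2]
    ring
  constructor
  · rw [hG2', hF]
    rw [show (RatFunc.X : RatFunc k) ^ 3 * φ f = φ (X ^ 3 * f) by
      rw [_root_.map_mul, _root_.map_pow, RatFunc.algebraMap_X]]
    rw [_root_.map_neg, neg_div, neg_neg]
  · intro u v hu hv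
    have hu' : (C u : k[X]) ^ 3 = C a6 := by rw [← _root_.map_pow, hu]
    have hv' : (C v : k[X]) ^ 3 = C a3 := by rw [← _root_.map_pow, hv]
    rw [hG2', hF, _root_.map_neg, neg_div, neg_neg, div_mul_eq_mul_div,
      eq_div_iff (RatFunc.algebraMap_ne_zero (mul_ne_zero (pow_ne_zero 3 hX0) hf0)),
      ← _root_.map_mul, ← _root_.map_mul]
    refine congrArg φ ?_
    linear_combination (X^6*f) * hu' + (X^3*f) * hv' +
      (X^3*f*(C u*X^5 + C v*X^4 + C u^2*X^4 + C u^2*C v*X^2 + C v^2*X^2 + C u*C v^2*X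
        + 2*C u*C v*X^3)) * h3
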